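/- With the data of the previous statement, the map β : U(𝔤) ⊗ M → U(𝔤) determined by x ⊗ m ↦ x·α(m) is a homomorphism of U(𝔤)-bimodules; i.e., (U(𝔤) ⊗ M → U(𝔤)) is an associative algebra object in LM. -/

import Mathlib

/-- Induction principle for the universal enveloping algebra. -/
theorem uea_induction {K : Type*} [CommRing K] {L : Type*} [LieRing L] [LieAlgebra K L]
    {C : UniversalEnvelopingAlgebra K L → Prop}
    (halg : ∀ r, C (algebraMap K (UniversalEnvelopingAlgebra K L) r))
    (hι : ∀ x, C (UniversalEnvelopingAlgebra.ι K x))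
    (hmul : ∀ a b, C a → C b → C (a * b))
    (hadd : ∀ a b, C a → C b → C (a + b))
    (a : UniversalEnvelopingAlgebra K L) : C a := by
  obtain ⟨t, rfl⟩ : ∃ t, UniversalEnvelopingAlgebra.mkAlgHom K L t = a :=
    RingCon.mkₐ_surjective (α := K) (UniversalEnvelopingAlgebra.ringCon K L) a
  induction t using TensorAlgebra.induction with
  | algebraMap r => rw [AlgHom.commutes]; exact halg r
  | ι x =>
    have : UniversalEnvelopingAlgebra.mkAlgHom K L (TensorAlgebra.ι K x)
        = UniversalEnvelopingAlgebra.ι K x := by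
      rw [UniversalEnvelopingAlgebra.ι_apply]
    rw [this]; exact hι x
  | mul a b ha hb => rw [map_mul]; exact hmul _ _ ha hb
  | add a b ha hb => rw [map_add]; exact hadd _ _ ha hb

open MulOpposite TensorProduct in
/-- With `α : M → 𝔤` a Lie algebra object in `LM` and the `U(𝔤)`-bimodule structure on
`U(𝔤) ⊗ M` given by `g·(x ⊗ m) = gx ⊗ m`, `(x ⊗ m)·g = xg ⊗ m + x ⊗ [m,g]`, the map
`β : U(𝔤) ⊗ M → U(𝔤)`, `x ⊗ m ↦ x·α(m)`, is a homomorphism of `U(𝔤)`-bimodules; i.e.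
`(U(𝔤) ⊗ M → U(𝔤))` is an associative algebra object in `LM`. -/
theorem LM_beta_is_bimodule_hom {K : Type*} [CommRing K]
    {L : Type*} [LieRing L] [LieAlgebra K L]
    {M : Type*} [AddCommGroup M] [Module K M]
    (ract : M →ₗ[K] L →ₗ[K] M)
    (hract : ∀ (m : M) (g g' : L),
      ract m ⁅g, g'⁆ = ract (ract m g) g' - ract (ract m g') g)
    (α : M →ₗ[K] L)
    (hα : ∀ (m : M) (g : L), α (ract m g) = ⁅α m, g⁆)
    -- the right U(𝔤)-action on U(𝔤) ⊗ M
    (ρ : (UniversalEnvelopingAlgebra K L)ᵐᵒᵖ →ₐ[K]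
        Module.End K (UniversalEnvelopingAlgebra K L ⊗[K] M))
    (hρ : ∀ (g : L) (x : UniversalEnvelopingAlgebra K L) (m : M),
      ρ (op (UniversalEnvelopingAlgebra.ι K g)) (x ⊗ₜ[K] m) =
        (x * UniversalEnvelopingAlgebra.ι K g) ⊗ₜ[K] m + x ⊗ₜ[K] ract m g)
    -- the map β : U(𝔤) ⊗ M → U(𝔤), x ⊗ m ↦ x·α(m)
    (β : UniversalEnvelopingAlgebra K L ⊗[K] M →ₗ[K] UniversalEnvelopingAlgebra K L)
    (hβ : ∀ (x : UniversalEnvelopingAlgebra K L) (m : M),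
      β (x ⊗ₜ[K] m) = x * (UniversalEnvelopingAlgebra.ι K) (α m)) :
    -- β is left U(𝔤)-linear
    (∀ (u : UniversalEnvelopingAlgebra K L)
        (z : UniversalEnvelopingAlgebra K L ⊗[K] M),
      β (LinearMap.rTensor M (LinearMap.mulLeft K u) z) = u * β z)
    -- and right U(𝔤)-linear
    ∧ (∀ (w : (UniversalEnvelopingAlgebra K L)ᵐᵒᵖ)
        (z : UniversalEnvelopingAlgebra K L ⊗[K] M),
      β (ρ w z) = β z * w.unop) := by
  constructor
  · intro u z
    induction z using TensorProduct.induction_on with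
    | zero => simp
    | tmul x m => simp [hβ, mul_assoc]
    | add a b ha hb => simp [ha, hb, mul_add]
  · have key : ∀ (w : UniversalEnvelopingAlgebra K L)
        (z : UniversalEnvelopingAlgebra K L ⊗[K] M),
        β (ρ (op w) z) = β z * w := by
      intro w
      induction w using uea_induction with
      | halg r =>
        intro z
        rw [← MulOpposite.algebraMap_apply, AlgHom.commutes, Module.algebraMap_end_apply,
          map_smul, Algebra.algebraMap_eq_smul_one, mul_smul_comm, mul_one]
      | hι g =>
        intro z
        induction z using TensorProduct.induction_on with
        | zero => simp
        | tmul x m =>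
          letI : LieRing (UniversalEnvelopingAlgebra K L) := LieRing.ofAssociativeRing
          rw [hρ, map_add, hβ, hβ, hβ, hα, LieHom.map_lie, Ring.lie_def]
          noncomm_ring
        | add a b ha hb => rw [map_add, map_add, ha, hb, map_add, add_mul]
      | hmul a b ha hb =>
        intro z
        rw [op_mul, map_mul, Module.End.mul_apply, hb, ha, mul_assoc]
      | hadd a b ha hb =>
        intro z
        rw [op_add, map_add, LinearMap.add_apply, map_add, ha, hb, mul_add]
    intro w z
    rw [← op_unop w]
    exact key _ z
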